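/- arXiv:2010.13139 — 10 statements merged into one kernel-verified Lean document; each statement's English description precedes it below -/
import Mathlib

section
/- If U is uniform on (0,1), the Tsallis entropy of the MRSSU sample of size n from U equals S_α(U_MRSSU) = (1/(α−1)) ( 1 − (n!)^α / ∏_{i=1}^n (1 + α(i−1)) ). -/
open MeasureTheory Set Finset

lemma mrssu_integral (α : ℝ) (hα : 0 < α) (i : ℕ) :
    ∫ x in (0:ℝ)..1, (((i : ℝ) + 1) * x ^ (i : ℕ)) ^ α
      = ((i : ℝ) + 1) ^ α / ((i : ℝ) * α + 1) := by
  have hcong : ∀ x ∈ Set.uIcc (0:ℝ) 1,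
      (((i : ℝ) + 1) * x ^ (i : ℕ)) ^ α = ((i : ℝ) + 1) ^ α * x ^ ((i : ℝ) * α) := by
    intro x hx
    rw [Set.uIcc_of_le (by norm_num : (0:ℝ) ≤ 1)] at hx
    have hx0 : 0 ≤ x := hx.1
    rw [Real.mul_rpow (by positivity) (by positivity), ← Real.rpow_natCast x i,
      ← Real.rpow_mul hx0]
  rw [intervalIntegral.integral_congr hcong, intervalIntegral.integral_const_mul,
    integral_rpow]
  · rw [Real.one_rpow, Real.zero_rpow (by positivity : (0:ℝ) < (i:ℝ)*α+1).ne']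
    ring
  · left
    have : (0:ℝ) ≤ (i:ℝ) * α := mul_nonneg (Nat.cast_nonneg i) hα.le
    linarith

/-- Tsallis entropy of the MRSSU sample of size `n` from a uniform(0,1) population:
`S_α(U_MRSSU) = (1/(α−1)) (1 − (n!)^α / ∏_{i=1}^n (1 + α(i−1)))`. -/
theorem tsallis_entropy_mrssu_uniform
    (α : ℝ) (n : ℕ) (hα : 0 < α) (hα1 : α ≠ 1) :
    (1 / (1 - α)) *
      ((∏ i ∈ Finset.range n,
        ∫ x in (0:ℝ)..1, (((i : ℝ) + 1) * x ^ (i : ℕ)) ^ α) - 1)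
    = (1 / (α - 1)) *
      (1 - (n.factorial : ℝ) ^ α / ∏ i ∈ Finset.range n, (1 + α * (i : ℝ))) := by
  have hprod : (∏ i ∈ Finset.range n,
      ∫ x in (0:ℝ)..1, (((i : ℝ) + 1) * x ^ (i : ℕ)) ^ α)
      = (n.factorial : ℝ) ^ α / ∏ i ∈ Finset.range n, (1 + α * (i : ℝ)) := by
    simp_rw [mrssu_integral α hα]
    rw [Finset.prod_div_distrib, Real.finset_prod_rpow _ _ (fun i _ => by positivity)]
    congr 1
    · congr 1
      induction n with
      | zero => simp
      | succ k ih =>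
        rw [Finset.prod_range_succ, ih, Nat.factorial_succ]
        push_cast; ring
    · exact Finset.prod_congr rfl (fun i _ => by ring)
  rw [hprod]
  have h1 : 1 - α ≠ 0 := by intro h; apply hα1; linarith
  have h2 : α - 1 ≠ 0 := by intro h; apply hα1; linarith
  field_simp
  ring
end

section
/- For any α>0, α≠1, the normalized Tsallis entropies of MRSSU and SRS samples of size n satisfy (1−α) S_α(X_MRSSU) + 1 ≤ (n!)^α [ (1−α) S_α(X_SRS) + 1 ]. -/
open MeasureTheory Set Finset

lemma prod_range_succ_eq_factorial (n : ℕ) :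
    ∏ i ∈ Finset.range n, ((i : ℝ) + 1) = (n.factorial : ℝ) := by
  induction n with
  | zero => simp
  | succ k ih => rw [Finset.prod_range_succ, ih, Nat.factorial_succ]; push_cast; ring

/-- `(1−α) S_α(X_MRSSU) + 1 ≤ (n!)^α [ (1−α) S_α(X_SRS) + 1 ]` for `α>0, α≠1`. -/
theorem tsallis_mrssu_le_srs_bound
    (f F : ℝ → ℝ) (α : ℝ) (n : ℕ) (hα : 0 < α) (hα1 : α ≠ 1)
    (hf : ∀ x, 0 ≤ f x)
    (hF : ∀ x, F x = ∫ t in (0:ℝ)..x, f t)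
    (hF01 : ∀ x, 0 ≤ F x ∧ F x ≤ 1)
    (hfi : Integrable (fun x => f x ^ α) (volume.restrict (Set.Ioi (0:ℝ))))
    (S_MRSSU S_SRS : ℝ)
    (hM : S_MRSSU = (1 / (1 - α)) *
      ((∏ i ∈ Finset.range n,
        ∫ x in Set.Ioi (0:ℝ), (((i : ℝ) + 1) * f x * F x ^ (i : ℕ)) ^ α) - 1))
    (hS : S_SRS = (1 / (1 - α)) *
      ((∫ x in Set.Ioi (0:ℝ), f x ^ α) ^ n - 1)) :
    (1 - α) * S_MRSSU + 1 ≤ (n.factorial : ℝ) ^ α * ((1 - α) * S_SRS + 1) := by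
  have h1 : (1 : ℝ) - α ≠ 0 := sub_ne_zero.mpr (Ne.symm hα1)
  have hsimp : ∀ X : ℝ, (1 - α) * ((1 / (1 - α)) * (X - 1)) + 1 = X := by
    intro X; field_simp; ring
  rw [hM, hS, hsimp, hsimp]
  set I := ∫ x in Set.Ioi (0:ℝ), f x ^ α with hI
  have hInn : 0 ≤ I := integral_nonneg fun x => Real.rpow_nonneg (hf x) α
  have key : ∀ i ∈ Finset.range n,
      (∫ x in Set.Ioi (0:ℝ), (((i : ℝ) + 1) * f x * F x ^ (i : ℕ)) ^ α)
        ≤ ((i : ℝ) + 1) ^ α * I := by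
    intro i _
    rw [hI, ← MeasureTheory.integral_const_mul]
    apply integral_mono_of_nonneg
    · filter_upwards with x
      have hfx := hf x
      have hF0 := (hF01 x).1
      exact Real.rpow_nonneg (by positivity) α
    · exact hfi.const_mul _
    · filter_upwards with x
      have hFx := hF01 x
      have hfx := hf x
      have hF0 := hFx.1
      have hbase : ((i : ℝ) + 1) * f x * F x ^ (i : ℕ) ≤ ((i : ℝ) + 1) * f x := by
        have hp : F x ^ (i : ℕ) ≤ 1 := pow_le_one₀ hFx.1 hFx.2
        calc ((i : ℝ) + 1) * f x * F x ^ (i : ℕ)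
            ≤ ((i : ℝ) + 1) * f x * 1 := by
              apply mul_le_mul_of_nonneg_left hp (by positivity)
          _ = ((i : ℝ) + 1) * f x := by ring
      calc (((i : ℝ) + 1) * f x * F x ^ (i : ℕ)) ^ α
          ≤ (((i : ℝ) + 1) * f x) ^ α :=
            Real.rpow_le_rpow (by positivity) hbase hα.le
        _ = ((i : ℝ) + 1) ^ α * f x ^ α :=
            Real.mul_rpow (by positivity) (hf x)
  calc (∏ i ∈ Finset.range n,
        ∫ x in Set.Ioi (0:ℝ), (((i : ℝ) + 1) * f x * F x ^ (i : ℕ)) ^ α)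
      ≤ ∏ i ∈ Finset.range n, (((i : ℝ) + 1) ^ α * I) := by
        apply Finset.prod_le_prod
        · intro i _
          exact integral_nonneg fun x => Real.rpow_nonneg (by have := (hF01 x).1; have := hf x; positivity) α
        · exact key
    _ = (n.factorial : ℝ) ^ α * I ^ n := by
        rw [Finset.prod_mul_distrib, Finset.prod_const, Finset.card_range,
          ← prod_range_succ_eq_factorial,
          ← Real.finset_prod_rpow _ _ (fun i _ => by positivity) α]
end

section
/- If X is less than Y in the dispersive order (f(F⁻¹(u)) ≥ g(G⁻¹(u)) for all u ∈ (0,1)), then S_α(X_MRSSU) ≤ S_α(Y_MRSSU) for all α>0, α≠1. -/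
open MeasureTheory Set Finset

lemma ae_restrict_Ioo_of_Icc {P : ℝ → Prop} (h : ∀ u ∈ Set.Ioo (0:ℝ) 1, P u) :
    ∀ᵐ u ∂(volume.restrict (Set.Icc (0:ℝ) 1)), P u := by
  rw [← Measure.restrict_congr_set Ioo_ae_eq_Icc]
  exact (ae_restrict_mem measurableSet_Ioo).mono h

lemma integral_nonneg_Ioo (h : ℝ → ℝ) (hh : ∀ u ∈ Set.Ioo (0:ℝ) 1, 0 ≤ h u) :
    0 ≤ ∫ u in (0:ℝ)..1, h u :=
  intervalIntegral.integral_nonneg_of_ae_restrict (by norm_num)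
    (ae_restrict_Ioo_of_Icc hh)

lemma integral_mono_Ioo (h1 h2 : ℝ → ℝ)
    (h1int : IntervalIntegrable h1 volume 0 1)
    (h2int : IntervalIntegrable h2 volume 0 1)
    (hle : ∀ u ∈ Set.Ioo (0:ℝ) 1, h1 u ≤ h2 u) :
    (∫ u in (0:ℝ)..1, h1 u) ≤ ∫ u in (0:ℝ)..1, h2 u :=
  intervalIntegral.integral_mono_ae_restrict (by norm_num) h1int h2int
    (ae_restrict_Ioo_of_Icc hle)

/-- If `X ≤_disp Y`, i.e. `f(F⁻¹(u)) ≥ g(G⁻¹(u))` for all `u ∈ (0,1)`, then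
`S_α(X_MRSSU) ≤ S_α(Y_MRSSU)` for all `α>0, α≠1`. -/
theorem tsallis_mrssu_dispersive_order
    (f g QX QY : ℝ → ℝ) (α : ℝ) (n : ℕ) (hα : 0 < α) (hα1 : α ≠ 1)
    (hfpos : ∀ u ∈ Set.Ioo (0:ℝ) 1, 0 < f (QX u))
    (hgpos : ∀ u ∈ Set.Ioo (0:ℝ) 1, 0 < g (QY u))
    (hdisp : ∀ u ∈ Set.Ioo (0:ℝ) 1, g (QY u) ≤ f (QX u))
    (hfint : ∀ i : ℕ, IntervalIntegrable
      (fun u => ((i : ℝ) + 1) ^ α * u ^ (α * (i : ℝ)) * f (QX u) ^ (α - 1))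
      volume 0 1)
    (hgint : ∀ i : ℕ, IntervalIntegrable
      (fun u => ((i : ℝ) + 1) ^ α * u ^ (α * (i : ℝ)) * g (QY u) ^ (α - 1))
      volume 0 1) :
    (1 / (1 - α)) *
      ((∏ i ∈ Finset.range n,
        ∫ u in (0:ℝ)..1, ((i : ℝ) + 1) ^ α * u ^ (α * (i : ℝ)) *
          f (QX u) ^ (α - 1)) - 1)
    ≤ (1 / (1 - α)) *
      ((∏ i ∈ Finset.range n,
        ∫ u in (0:ℝ)..1, ((i : ℝ) + 1) ^ α * u ^ (α * (i : ℝ)) *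
          g (QY u) ^ (α - 1)) - 1) := by
  have hcoef : ∀ (i : ℕ) (u : ℝ), u ∈ Set.Ioo (0:ℝ) 1 →
      0 ≤ ((i : ℝ) + 1) ^ α * u ^ (α * (i : ℝ)) := by
    intro i u hu
    have : (0:ℝ) < u := hu.1
    positivity
  rcases hα1.lt_or_gt with h1 | h1
  · -- α < 1 : coefficient 1/(1-α) is nonneg, need prod_f ≤ prod_g
    have hle : ∀ i ∈ Finset.range n,
        (∫ u in (0:ℝ)..1, ((i : ℝ) + 1) ^ α * u ^ (α * (i : ℝ)) * f (QX u) ^ (α - 1))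
        ≤ ∫ u in (0:ℝ)..1, ((i : ℝ) + 1) ^ α * u ^ (α * (i : ℝ)) * g (QY u) ^ (α - 1) := by
      intro i _
      refine integral_mono_Ioo _ _ (hfint i) (hgint i) ?_
      intro u hu
      have := Real.rpow_le_rpow_of_nonpos (hgpos u hu) (hdisp u hu) (by linarith : α - 1 ≤ 0)
      exact mul_le_mul_of_nonneg_left this (hcoef i u hu)
    have hnn : ∀ i ∈ Finset.range n,
        0 ≤ ∫ u in (0:ℝ)..1, ((i : ℝ) + 1) ^ α * u ^ (α * (i : ℝ)) * f (QX u) ^ (α - 1) := by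
      intro i _
      refine integral_nonneg_Ioo _ ?_
      intro u hu
      exact mul_nonneg (hcoef i u hu) (Real.rpow_nonneg (hfpos u hu).le _)
    have hprod := Finset.prod_le_prod hnn hle
    have hc : 0 ≤ 1 / (1 - α) := by
      have : (0:ℝ) < 1 - α := by linarith
      positivity
    exact mul_le_mul_of_nonneg_left (by linarith) hc
  · -- α > 1 : coefficient is nonpos, need prod_g ≤ prod_f
    have hle : ∀ i ∈ Finset.range n,
        (∫ u in (0:ℝ)..1, ((i : ℝ) + 1) ^ α * u ^ (α * (i : ℝ)) * g (QY u) ^ (α - 1))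
        ≤ ∫ u in (0:ℝ)..1, ((i : ℝ) + 1) ^ α * u ^ (α * (i : ℝ)) * f (QX u) ^ (α - 1) := by
      intro i _
      refine integral_mono_Ioo _ _ (hgint i) (hfint i) ?_
      intro u hu
      have := Real.rpow_le_rpow (hgpos u hu).le (hdisp u hu) (by linarith : (0:ℝ) ≤ α - 1)
      exact mul_le_mul_of_nonneg_left this (hcoef i u hu)
    have hnn : ∀ i ∈ Finset.range n,
        0 ≤ ∫ u in (0:ℝ)..1, ((i : ℝ) + 1) ^ α * u ^ (α * (i : ℝ)) * g (QY u) ^ (α - 1) := by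
      intro i _
      refine integral_nonneg_Ioo _ ?_
      intro u hu
      exact mul_nonneg (hcoef i u hu) (Real.rpow_nonneg (hgpos u hu).le _)
    have hprod := Finset.prod_le_prod hnn hle
    have hc : 1 / (1 - α) ≤ 0 := by
      apply div_nonpos_of_nonneg_of_nonpos <;> linarith
    exact mul_le_mul_of_nonpos_left (by linarith) hc
end

section
/- For X uniform on (0,b), with n=2: S_α(X_SRS) = (1/(α−1))[1 − b^{2−2α}], S_α(X_RSS) = (1/(α−1))[1 − 4^α b^{2−2α}/(α+1)²], and S_α(X_MRSSU) = (1/(α−1))[1 − 2^α b^{2−2α}/(α+1)]. -/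
open MeasureTheory Set

lemma int_const' (b α : ℝ) : (∫ _x in (0:ℝ)..b, (1 / b) ^ α) = b * (1/b)^α := by
  simp

lemma int_pow (b α : ℝ) (hb : 0 < b) (hα : 0 < α) :
    (∫ x in (0:ℝ)..b, (2 * (1 / b) * (x / b)) ^ α)
      = (2/b^2)^α * (b^(α+1) / (α+1)) := by
  have h1 : (∫ x in (0:ℝ)..b, (2 * (1 / b) * (x / b)) ^ α)
      = ∫ x in (0:ℝ)..b, (2/b^2)^α * x ^ α := by
    apply intervalIntegral.integral_congr
    intro x hx
    rw [uIcc_of_le hb.le] at hx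
    have hx0 : 0 ≤ x := hx.1
    have : 2 * (1 / b) * (x / b) = (2/b^2) * x := by ring
    show (2 * (1 / b) * (x / b)) ^ α = (2/b^2)^α * x ^ α
    rw [this, Real.mul_rpow (by positivity) hx0]
  rw [h1, intervalIntegral.integral_const_mul,
    integral_rpow (Or.inl (by linarith))]
  rw [Real.zero_rpow (by linarith)]
  ring

lemma int_pow' (b α : ℝ) (hb : 0 < b) (hα : 0 < α) :
    (∫ x in (0:ℝ)..b, (2 * (1 / b) * (1 - x / b)) ^ α)
      = (2/b^2)^α * (b^(α+1) / (α+1)) := by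
  have h1 : (∫ x in (0:ℝ)..b, (2 * (1 / b) * (1 - x / b)) ^ α)
      = ∫ x in (0:ℝ)..b, (fun y => (2 * (1 / b) * (y / b)) ^ α) (b - x) := by
    apply intervalIntegral.integral_congr
    intro x hx
    show (2 * (1 / b) * (1 - x / b)) ^ α = (2 * (1 / b) * ((b - x) / b)) ^ α
    congr 1
    field_simp
  rw [h1, intervalIntegral.integral_comp_sub_left (fun y => (2 * (1 / b) * (y / b)) ^ α) b]
  simp only [sub_self, sub_zero]
  exact int_pow b α hb hα

lemma I1_eq (b α : ℝ) (hb : 0 < b) : b * (1/b)^α = b ^ (1-α) := by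
  rw [one_div, Real.inv_rpow hb.le, ← Real.rpow_neg hb.le, show (1:ℝ)-α = 1 + -α by ring,
    Real.rpow_add hb, Real.rpow_one]

lemma I2_eq (b α : ℝ) (hb : 0 < b) :
    (2/b^2)^α * (b^(α+1) / (α+1)) = 2^α * b^(1-α)/(α+1) := by
  rw [Real.div_rpow (by norm_num) (by positivity), ← Real.rpow_natCast b 2,
    ← Real.rpow_mul hb.le]
  push_cast
  rw [div_mul_eq_mul_div, mul_div_assoc, div_div, mul_comm (α+1) (b ^ (2 * α)),
    ← div_div, ← Real.rpow_sub hb, mul_div_assoc]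
  ring_nf

/-- Tsallis entropies of SRS, RSS and MRSSU samples of size 2 from a
uniform(0,b) population. -/
theorem tsallis_uniform_n2
    (b α : ℝ) (hb : 0 < b) (hα : 0 < α) (hα1 : α ≠ 1) :
    ((1 / (1 - α)) * ((∫ x in (0:ℝ)..b, (1 / b) ^ α) ^ 2 - 1)
        = (1 / (α - 1)) * (1 - b ^ (2 - 2 * α))) ∧
    ((1 / (1 - α)) *
        ((∫ x in (0:ℝ)..b, (2 * (1 / b) * (1 - x / b)) ^ α) *
          (∫ x in (0:ℝ)..b, (2 * (1 / b) * (x / b)) ^ α) - 1)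
        = (1 / (α - 1)) * (1 - 4 ^ α * b ^ (2 - 2 * α) / (α + 1) ^ 2)) ∧
    ((1 / (1 - α)) *
        ((∫ x in (0:ℝ)..b, (1 / b) ^ α) *
          (∫ x in (0:ℝ)..b, (2 * (1 / b) * (x / b)) ^ α) - 1)
        = (1 / (α - 1)) * (1 - 2 ^ α * b ^ (2 - 2 * α) / (α + 1))) := by
  have h1α : (1:ℝ) - α ≠ 0 := sub_ne_zero.mpr (Ne.symm hα1)
  have hα1' : α - 1 ≠ 0 := sub_ne_zero.mpr hα1
  have hαp : α + 1 ≠ 0 := by positivity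
  have hB2 : b^(1-α) * b^(1-α) = b^(2-2*α) := by
    rw [← Real.rpow_add hb]; ring_nf
  have h4 : (4:ℝ)^α = 2^α * 2^α := by
    rw [show (4:ℝ) = 2*2 by norm_num, Real.mul_rpow (by norm_num) (by norm_num)]
  rw [int_const', int_pow b α hb hα, int_pow' b α hb hα, I1_eq b α hb, I2_eq b α hb]
  refine ⟨?_, ?_, ?_⟩
  · rw [sq, hB2]; field_simp; ring
  · rw [h4, ← hB2]; field_simp; ring
  · rw [← hB2]; field_simp; ring
end

section
/- For X uniform on (0,b) and n=2, S_α(X_RSS) ≤ S_α(X_MRSSU) ≤ S_α(X_SRS) for all α>0, α≠1. -/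
open MeasureTheory Set

lemma integral_lin_rpow (b α : ℝ) (hb : 0 < b) (hα : 0 < α) :
    (∫ x in (0:ℝ)..b, (2 * (1 / b) * (x / b)) ^ α) = 2 ^ α / (α + 1) * (b / b ^ α) := by
  have hb' : b ≠ 0 := hb.ne'
  have hba : (b : ℝ) ^ α ≠ 0 := (Real.rpow_pos_of_pos hb α).ne'
  have hcong : EqOn (fun x : ℝ => (2 * (1 / b) * (x / b)) ^ α)
      (fun x : ℝ => (2 / (b * b)) ^ α * x ^ α) (Set.uIcc (0:ℝ) b) := by
    intro x hx
    rw [Set.uIcc_of_le hb.le] at hx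
    have hx0 : 0 ≤ x := hx.1
    have h1 : 2 * (1 / b) * (x / b) = (2 / (b * b)) * x := by field_simp
    simp only [h1]
    rw [Real.mul_rpow (by positivity) hx0]
  rw [intervalIntegral.integral_congr hcong,
    intervalIntegral.integral_const_mul,
    integral_rpow (Or.inl (by linarith : (-1:ℝ) < α))]
  have h0 : (0:ℝ) ^ (α + 1) = 0 := Real.zero_rpow (by linarith)
  rw [h0, sub_zero]
  rw [Real.div_rpow (by norm_num) (by positivity),
    Real.mul_rpow hb.le hb.le]
  have hb1 : b ^ (α + 1) = b ^ α * b := by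
    rw [Real.rpow_add hb, Real.rpow_one]
  rw [hb1]
  have hαn : (α + 1) ≠ 0 := by linarith
  field_simp

/-- For `X` uniform on `(0,b)` and `n = 2`:
`S_α(X_RSS) ≤ S_α(X_MRSSU) ≤ S_α(X_SRS)` for all `α>0, α≠1`. -/
theorem tsallis_uniform_n2_ordering
    (b α : ℝ) (hb : 0 < b) (hα : 0 < α) (hα1 : α ≠ 1)
    (S_SRS S_RSS S_MRSSU : ℝ)
    (hS : S_SRS = (1 / (1 - α)) * ((∫ x in (0:ℝ)..b, (1 / b) ^ α) ^ 2 - 1))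
    (hR : S_RSS = (1 / (1 - α)) *
      ((∫ x in (0:ℝ)..b, (2 * (1 / b) * (1 - x / b)) ^ α) *
        (∫ x in (0:ℝ)..b, (2 * (1 / b) * (x / b)) ^ α) - 1))
    (hM : S_MRSSU = (1 / (1 - α)) *
      ((∫ x in (0:ℝ)..b, (1 / b) ^ α) *
        (∫ x in (0:ℝ)..b, (2 * (1 / b) * (x / b)) ^ α) - 1)) :
    S_RSS ≤ S_MRSSU ∧ S_MRSSU ≤ S_SRS := by
  have hb' : b ≠ 0 := hb.ne'
  -- constant integral
  have hI1 : (∫ x in (0:ℝ)..b, (1 / b) ^ α) = b / b ^ α := by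
    rw [intervalIntegral.integral_const]
    rw [one_div, Real.inv_rpow hb.le]
    simp [smul_eq_mul, div_eq_mul_inv]
  have hI2 := integral_lin_rpow b α hb hα
  -- the symmetric integral
  have hI3 : (∫ x in (0:ℝ)..b, (2 * (1 / b) * (1 - x / b)) ^ α)
      = 2 ^ α / (α + 1) * (b / b ^ α) := by
    have : (∫ x in (0:ℝ)..b, (2 * (1 / b) * (1 - x / b)) ^ α)
        = ∫ x in (0:ℝ)..b, (fun y : ℝ => (2 * (1 / b) * (y / b)) ^ α) (b - x) := by
      apply intervalIntegral.integral_congr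
      intro x _
      have : (1 : ℝ) - x / b = (b - x) / b := by field_simp
      simp only [this]
    rw [this, intervalIntegral.integral_comp_sub_left
      (fun y : ℝ => (2 * (1 / b) * (y / b)) ^ α) b]
    simpa using hI2
  simp only [hI1, hI2, hI3] at hS hR hM
  set K : ℝ := b / b ^ α with hK
  set T : ℝ := 2 ^ α / (α + 1) with hT
  have hKpos : 0 < K := by
    have := Real.rpow_pos_of_pos hb α
    positivity
  have hTpos : 0 < T := by
    have h2 : (0:ℝ) < 2 ^ α := Real.rpow_pos_of_pos (by norm_num) α
    have : (0:ℝ) < α + 1 := by linarith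
    positivity
  rcases lt_or_gt_of_ne hα1 with hcase | hcase
  · -- α < 1 : T ≤ 1, 1/(1-α) > 0
    have hT1 : T ≤ 1 := by
      have h2 : (2:ℝ) ^ α ≤ 1 + α * 1 := by
        have := rpow_one_add_le_one_add_mul_self (s := 1) (by norm_num) hα.le hcase.le
        norm_num at this ⊢
        linarith
      rw [hT, div_le_one (by linarith)]
      linarith
    have hc : 0 < 1 / (1 - α) := by
      have : (0:ℝ) < 1 - α := by linarith
      positivity
    constructor
    · rw [hR, hM]
      apply mul_le_mul_of_nonneg_left _ hc.le
      nlinarith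
    · rw [hM, hS]
      apply mul_le_mul_of_nonneg_left _ hc.le
      nlinarith
  · -- α > 1 : T ≥ 1, 1/(1-α) < 0
    have hT1 : 1 ≤ T := by
      have h2 : 1 + α * 1 ≤ (2:ℝ) ^ α := by
        have := one_add_mul_self_le_rpow_one_add (s := 1) (by norm_num) hcase.le
        norm_num at this ⊢
        linarith
      rw [hT, le_div_iff₀ (by linarith)]
      linarith
    have hc : 1 / (1 - α) ≤ 0 := by
      apply div_nonpos_of_nonneg_of_nonpos <;> linarith
    constructor
    · rw [hR, hM]
      apply mul_le_mul_of_nonpos_left _ hc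
      nlinarith
    · rw [hM, hS]
      apply mul_le_mul_of_nonpos_left _ hc
      nlinarith
end

section
/- For X exponential with rate θ and n=2: S_α(X_SRS) = (1/(α−1))(1 − θ^{2α−2}/α²), S_α(X_RSS) = (1/(α−1))(1 − θ^{2α−2} 4^α B(α+1,α)/(2α)), and S_α(X_MRSSU) = (1/(α−1))(1 − θ^{2α−2} 2^α B(α+1,α)/α), where B is the Beta function. -/
open MeasureTheory Set Real

lemma int_exp_base (b : ℝ) (hb : 0 < b) :
    ∫ x in Ioi (0:ℝ), Real.exp (-(b * x)) = 1 / b := by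
  have h := integral_comp_mul_left_Ioi (fun y : ℝ => Real.exp (-y)) 0 hb
  simp only [mul_zero, integral_exp_neg_Ioi_zero, smul_eq_mul, mul_one] at h
  rw [h]
  simp [one_div]

lemma int_pow_exp (c b α : ℝ) (hc : 0 < c) (hb : 0 < b) (hα : 0 < α) :
    ∫ x in Ioi (0:ℝ), (c * Real.exp (-(b * x))) ^ α = c ^ α / (b * α) := by
  have hpt : ∀ x : ℝ, (c * Real.exp (-(b * x))) ^ α
      = c ^ α * Real.exp (-(b * α * x)) := by
    intro x
    rw [Real.mul_rpow hc.le (Real.exp_pos _).le,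
      Real.rpow_def_of_pos (Real.exp_pos _), Real.log_exp]
    ring_nf
  simp_rw [hpt]
  rw [integral_const_mul, int_exp_base _ (by positivity)]
  field_simp

lemma int_I3 (θ α : ℝ) (hθ : 0 < θ) (hα : 0 < α) :
    ∫ x in Ioi (0:ℝ), (2 * (θ * Real.exp (-θ * x)) * (1 - Real.exp (-θ * x))) ^ α
      = 2 ^ α * θ ^ (α - 1) *
        ∫ u in Ioo (0:ℝ) 1, u ^ α * (1 - u) ^ (α - 1) := by
  set f : ℝ → ℝ := fun x => 1 - Real.exp (-θ * x) with hf
  have hderiv : ∀ x ∈ Ioi (0:ℝ),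
      HasDerivWithinAt f (θ * Real.exp (-θ * x)) (Ioi 0) x := by
    intro x _
    have h1 : HasDerivAt (fun x : ℝ => -θ * x) (-θ) x := by
      simpa using (hasDerivAt_id x).const_mul (-θ)
    have h2 : HasDerivAt (fun x : ℝ => Real.exp (-θ * x))
        (Real.exp (-θ * x) * (-θ)) x := (Real.hasDerivAt_exp _).comp x h1
    have h3 : HasDerivAt f (θ * Real.exp (-θ * x)) x := by
      simpa [hf, mul_comm] using h2.const_sub 1
    exact h3.hasDerivWithinAt
  have hinj : InjOn f (Ioi 0) := by
    intro a _ b _ hab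
    have : Real.exp (-θ * a) = Real.exp (-θ * b) := by
      simpa [hf, sub_eq_sub_iff_sub_eq_sub] using hab
    have := Real.exp_injective this
    exact mul_left_cancel₀ (by linarith : (-θ : ℝ) ≠ 0) this
  have himg : f '' Ioi 0 = Ioo 0 1 := by
    ext u
    constructor
    · rintro ⟨x, hx, rfl⟩
      have h1 : Real.exp (-θ * x) < 1 := by
        rw [Real.exp_lt_one_iff]
        nlinarith [mem_Ioi.mp hx]
      have h2 : 0 < Real.exp (-θ * x) := Real.exp_pos _
      have hfx : f x = 1 - Real.exp (-θ * x) := rfl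
      rw [hfx]
      exact ⟨by linarith, by linarith⟩
    · rintro ⟨h0, h1⟩
      refine ⟨-Real.log (1 - u) / θ, ?_, ?_⟩
      · have hlog : Real.log (1 - u) < 0 := Real.log_neg (by linarith) (by linarith)
        exact mem_Ioi.mpr (div_pos (neg_pos.mpr hlog) hθ)
      · have harg : -θ * (-Real.log (1 - u) / θ) = Real.log (1 - u) := by
          field_simp
        show 1 - Real.exp (-θ * (-Real.log (1 - u) / θ)) = u
        rw [harg, Real.exp_log (by linarith : (0:ℝ) < 1 - u)]
        ring
  have key := integral_image_eq_integral_abs_deriv_smul measurableSet_Ioi hderiv hinj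
    (fun u => u ^ α * (1 - u) ^ (α - 1))
  rw [himg] at key
  rw [key, ← integral_const_mul]
  refine setIntegral_congr_fun measurableSet_Ioi ?_
  intro x hx
  have hx0 : (0:ℝ) < x := hx
  have he : 0 < Real.exp (-θ * x) := Real.exp_pos _
  have he1 : Real.exp (-θ * x) < 1 := by
    rw [Real.exp_lt_one_iff]; nlinarith
  simp only [hf, smul_eq_mul, sub_sub_cancel]
  rw [abs_of_pos (by positivity)]
  rw [show (2 * (θ * Real.exp (-θ * x)) * (1 - Real.exp (-θ * x)))
      = 2 * θ * Real.exp (-θ * x) * (1 - Real.exp (-θ * x)) by ring]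
  rw [Real.mul_rpow (by positivity) (by linarith),
    Real.mul_rpow (by positivity) he.le,
    Real.mul_rpow (by norm_num) hθ.le]
  have hea : Real.exp (-θ * x) ^ α
      = Real.exp (-θ * x) * Real.exp (-θ * x) ^ (α - 1) := by
    have h := Real.rpow_add he 1 (α - 1)
    rw [Real.rpow_one] at h
    rw [show (1:ℝ) + (α - 1) = α by ring] at h
    exact h
  have hθa : θ ^ (α - 1) * θ = θ ^ α := by
    have h := Real.rpow_add_one hθ.ne' (α - 1)
    rw [show α - 1 + 1 = α by ring] at h
    exact h.symm
  rw [hea, ← hθa]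
  ring

/-- Tsallis entropies of SRS, RSS and MRSSU samples of size 2 from an
exponential(θ) population, where `B(a,b) = ∫₀¹ u^{a-1}(1-u)^{b-1} du`. -/
theorem tsallis_exponential_n2
    (θ α : ℝ) (hθ : 0 < θ) (hα : 0 < α) (hα1 : α ≠ 1)
    (B : ℝ) (hB : B = ∫ u in (0:ℝ)..1, u ^ α * (1 - u) ^ (α - 1)) :
    ((1 / (1 - α)) *
        ((∫ x in Set.Ioi (0:ℝ), (θ * Real.exp (-θ * x)) ^ α) ^ 2 - 1)
        = (1 / (α - 1)) * (1 - θ ^ (2 * α - 2) / α ^ 2)) ∧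
    ((1 / (1 - α)) *
        ((∫ x in Set.Ioi (0:ℝ),
            (2 * (θ * Real.exp (-θ * x)) * (1 - (1 - Real.exp (-θ * x)))) ^ α) *
          (∫ x in Set.Ioi (0:ℝ),
            (2 * (θ * Real.exp (-θ * x)) * (1 - Real.exp (-θ * x))) ^ α) - 1)
        = (1 / (α - 1)) * (1 - θ ^ (2 * α - 2) * 4 ^ α * B / (2 * α))) ∧
    ((1 / (1 - α)) *
        ((∫ x in Set.Ioi (0:ℝ), (θ * Real.exp (-θ * x)) ^ α) *
          (∫ x in Set.Ioi (0:ℝ),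
            (2 * (θ * Real.exp (-θ * x)) * (1 - Real.exp (-θ * x))) ^ α) - 1)
        = (1 / (α - 1)) * (1 - θ ^ (2 * α - 2) * 2 ^ α * B / α)) := by
  have h1α : (1:ℝ) - α ≠ 0 := sub_ne_zero.mpr (Ne.symm hα1)
  have hα1' : α - 1 ≠ 0 := sub_ne_zero.mpr hα1
  have hI1 : (∫ x in Set.Ioi (0:ℝ), (θ * Real.exp (-θ * x)) ^ α)
      = θ ^ α / (θ * α) := by
    simp_rw [neg_mul]
    exact int_pow_exp θ θ α hθ hθ hα
  have hI2 : (∫ x in Set.Ioi (0:ℝ),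
      (2 * (θ * Real.exp (-θ * x)) * (1 - (1 - Real.exp (-θ * x)))) ^ α)
      = (2 * θ) ^ α / (2 * θ * α) := by
    have hpt : ∀ x : ℝ, 2 * (θ * Real.exp (-θ * x)) * (1 - (1 - Real.exp (-θ * x)))
        = 2 * θ * Real.exp (-(2 * θ * x)) := by
      intro x
      rw [show -(2 * θ * x) = -θ * x + -θ * x by ring, Real.exp_add]
      ring
    simp_rw [hpt]
    exact int_pow_exp _ _ _ (by positivity) (by positivity) hα
  have hBI : (∫ u in Ioo (0:ℝ) 1, u ^ α * (1 - u) ^ (α - 1)) = B := by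
    rw [hB, intervalIntegral.integral_of_le zero_le_one,
      MeasureTheory.integral_Ioc_eq_integral_Ioo]
  have hI3 : (∫ x in Set.Ioi (0:ℝ),
      (2 * (θ * Real.exp (-θ * x)) * (1 - Real.exp (-θ * x))) ^ α)
      = 2 ^ α * θ ^ (α - 1) * B := by
    rw [int_I3 θ α hθ hα, hBI]
  have hts : θ ^ (2 * α - 2) = θ ^ (α - 1) * θ ^ (α - 1) := by
    rw [← Real.rpow_add hθ]; ring_nf
  have hθa : θ ^ α = θ ^ (α - 1) * θ := by
    have h := Real.rpow_add_one hθ.ne' (α - 1)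
    rw [show α - 1 + 1 = α by ring] at h
    exact h
  have h2θ : (2 * θ) ^ α = 2 ^ α * (θ ^ (α - 1) * θ) := by
    rw [Real.mul_rpow (by norm_num) hθ.le, hθa]
  have h4 : (4:ℝ) ^ α = 2 ^ α * 2 ^ α := by
    rw [show (4:ℝ) = 2 * 2 by norm_num, Real.mul_rpow (by norm_num) (by norm_num)]
  have h2pos : (0:ℝ) < 2 ^ α := Real.rpow_pos_of_pos (by norm_num) α
  refine ⟨?_, ?_, ?_⟩
  · rw [hI1, hts, hθa]
    field_simp
    ring
  · rw [hI2, hI3, hts, h2θ, h4]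
    field_simp
    ring
  · rw [hI1, hI3, hts, hθa]
    field_simp
    ring
end

section
/- For the cumulative Tsallis entropy, ℂ𝔼_α(X_MRSSU) ≤ ℂ𝔼_α(X_SRS) for 0<α<1, and ℂ𝔼_α(X_MRSSU) ≥ ℂ𝔼_α(X_SRS) for α>1. -/
open MeasureTheory Set Finset

/-- Cumulative Tsallis entropy comparison:
`ℂ𝔼_α(X_MRSSU) ≤ ℂ𝔼_α(X_SRS)` for `0<α<1` and the reverse for `α>1`. -/
theorem cte_mrssu_vs_srs
    (F : ℝ → ℝ) (α : ℝ) (n : ℕ) (hα : 0 < α) (hα1 : α ≠ 1)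
    (hF01 : ∀ x, 0 ≤ F x ∧ F x ≤ 1) (hFmono : Monotone F)
    (hint : ∀ i : ℕ, 1 ≤ i → Integrable (fun x => F x ^ ((i : ℝ) * α))
      (volume.restrict (Set.Ioi (0:ℝ))))
    (CE_SRS CE_MRSSU : ℝ)
    (hS : CE_SRS = (1 / (1 - α)) *
      ((∫ x in Set.Ioi (0:ℝ), F x ^ α) ^ n - 1))
    (hM : CE_MRSSU = (1 / (1 - α)) *
      ((∏ i ∈ Finset.range n,
        ∫ x in Set.Ioi (0:ℝ), F x ^ (((i : ℝ) + 1) * α)) - 1)) :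
    (α < 1 → CE_MRSSU ≤ CE_SRS) ∧ (1 < α → CE_SRS ≤ CE_MRSSU) := by
  have hαeq : ∀ x, F x ^ α = F x ^ ((1:ℝ) * α) := by intro x; rw [one_mul]
  have hint1 : Integrable (fun x => F x ^ α) (volume.restrict (Set.Ioi (0:ℝ))) := by
    simpa [one_mul] using hint 1 le_rfl
  have hptw : ∀ (i : ℕ) (x : ℝ), F x ^ (((i : ℝ) + 1) * α) ≤ F x ^ α := by
    intro i x
    rcases eq_or_lt_of_le (hF01 x).1 with h0 | h0
    · rw [← h0, Real.zero_rpow (by positivity), Real.zero_rpow hα.ne']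
    · exact Real.rpow_le_rpow_of_exponent_ge h0 (hF01 x).2
        (by nlinarith [hα.le, (Nat.cast_nonneg i : (0:ℝ) ≤ i)])
  have hnn : ∀ (i : ℕ), 0 ≤ ∫ x in Set.Ioi (0:ℝ), F x ^ (((i : ℝ) + 1) * α) := by
    intro i
    apply integral_nonneg
    intro x
    have := (hF01 x).1
    positivity
  have hle : ∀ i ∈ Finset.range n,
      (∫ x in Set.Ioi (0:ℝ), F x ^ (((i : ℝ) + 1) * α)) ≤
        ∫ x in Set.Ioi (0:ℝ), F x ^ α := by
    intro i _
    have hinti : Integrable (fun x => F x ^ (((i : ℝ) + 1) * α))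
        (volume.restrict (Set.Ioi (0:ℝ))) := by
      have := hint (i + 1) (Nat.le_add_left 1 i)
      simpa [Nat.cast_add, Nat.cast_one] using this
    exact integral_mono hinti hint1 (hptw i)
  have key : (∏ i ∈ Finset.range n,
      ∫ x in Set.Ioi (0:ℝ), F x ^ (((i : ℝ) + 1) * α)) ≤
        (∫ x in Set.Ioi (0:ℝ), F x ^ α) ^ n := by
    calc (∏ i ∈ Finset.range n, ∫ x in Set.Ioi (0:ℝ), F x ^ (((i : ℝ) + 1) * α))
        ≤ ∏ _i ∈ Finset.range n, ∫ x in Set.Ioi (0:ℝ), F x ^ α :=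
          Finset.prod_le_prod (fun i _ => hnn i) hle
      _ = (∫ x in Set.Ioi (0:ℝ), F x ^ α) ^ n := by
          rw [Finset.prod_const, Finset.card_range]
  constructor
  · intro h1
    rw [hS, hM]
    have : (0:ℝ) ≤ 1 / (1 - α) := by
      apply div_nonneg zero_le_one; linarith
    apply mul_le_mul_of_nonneg_left _ this
    linarith
  · intro h1
    rw [hS, hM]
    have : 1 / (1 - α) ≤ 0 := by
      apply div_nonpos_of_nonneg_of_nonpos zero_le_one
      linarith
    apply mul_le_mul_of_nonpos_left _ this
    linarith
end

section
/- If X ≤_st Y (i.e. F(x) ≥ G(x) for all x ≥ 0), then ℂ𝔼_α(X_MRSSU) ≥ ℂ𝔼_α(Y_MRSSU) for 0<α<1, and ℂ𝔼_α(X_MRSSU) ≤ ℂ𝔼_α(Y_MRSSU) for α>1. -/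
open MeasureTheory Set Finset

/-- If `X ≤_st Y` (i.e. `F(x) ≥ G(x)` for all `x ≥ 0`), then
`ℂ𝔼_α(X_MRSSU) ≥ ℂ𝔼_α(Y_MRSSU)` for `0<α<1`, and `≤` for `α>1`. -/
theorem cte_mrssu_stochastic_order
    (F G : ℝ → ℝ) (α : ℝ) (n : ℕ) (hα : 0 < α) (hα1 : α ≠ 1)
    (hF01 : ∀ x, 0 ≤ F x ∧ F x ≤ 1) (hG01 : ∀ x, 0 ≤ G x ∧ G x ≤ 1)
    (hst : ∀ x, 0 ≤ x → G x ≤ F x)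
    (hFint : ∀ i : ℕ, Integrable (fun x => F x ^ (((i : ℝ) + 1) * α))
      (volume.restrict (Set.Ioi (0:ℝ))))
    (hGint : ∀ i : ℕ, Integrable (fun x => G x ^ (((i : ℝ) + 1) * α))
      (volume.restrict (Set.Ioi (0:ℝ))))
    (CE_X CE_Y : ℝ)
    (hX : CE_X = (1 / (1 - α)) *
      ((∏ i ∈ Finset.range n,
        ∫ x in Set.Ioi (0:ℝ), F x ^ (((i : ℝ) + 1) * α)) - 1))
    (hY : CE_Y = (1 / (1 - α)) *
      ((∏ i ∈ Finset.range n,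
        ∫ x in Set.Ioi (0:ℝ), G x ^ (((i : ℝ) + 1) * α)) - 1)) :
    (α < 1 → CE_Y ≤ CE_X) ∧ (1 < α → CE_X ≤ CE_Y) := by
  have hexp : ∀ i : ℕ, 0 < ((i : ℝ) + 1) * α := fun i => by positivity
  have hIG : ∀ i : ℕ, 0 ≤ ∫ x in Set.Ioi (0:ℝ), G x ^ (((i : ℝ) + 1) * α) :=
    fun i => integral_nonneg fun x => Real.rpow_nonneg (hG01 x).1 _
  have hle : ∀ i : ℕ, (∫ x in Set.Ioi (0:ℝ), G x ^ (((i : ℝ) + 1) * α)) ≤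
      ∫ x in Set.Ioi (0:ℝ), F x ^ (((i : ℝ) + 1) * α) := by
    intro i
    refine integral_mono_of_nonneg ?_ (hFint i) ?_
    · filter_upwards with x using Real.rpow_nonneg (hG01 x).1 _
    · filter_upwards [ae_restrict_mem measurableSet_Ioi] with x hx
      exact Real.rpow_le_rpow (hG01 x).1 (hst x hx.le) (hexp i).le
  have hprod : (∏ i ∈ Finset.range n, ∫ x in Set.Ioi (0:ℝ), G x ^ (((i : ℝ) + 1) * α)) ≤
      ∏ i ∈ Finset.range n, ∫ x in Set.Ioi (0:ℝ), F x ^ (((i : ℝ) + 1) * α) :=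
    Finset.prod_le_prod (fun i _ => hIG i) (fun i _ => hle i)
  constructor
  · intro h1
    rw [hX, hY]
    have : 0 ≤ 1 / (1 - α) := div_nonneg zero_le_one (by linarith)
    exact mul_le_mul_of_nonneg_left (by linarith) this
  · intro h1
    rw [hX, hY]
    have : 1 / (1 - α) ≤ 0 := by
      apply div_nonpos_of_nonneg_of_nonpos <;> linarith
    exact mul_le_mul_of_nonpos_left (by linarith) this
end

section
/- Under the affine transformation Y_MRSSU = a X_MRSSU + b with a>0, b≥0 (each component Y_i = aX_i + b), the cumulative Tsallis entropy transforms as ℂ𝔼_α(Y_MRSSU) = aⁿ ℂ𝔼_α(X_MRSSU) + (aⁿ−1)/(1−α). -/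
open MeasureTheory Set Finset

lemma key_int (F : ℝ → ℝ) (a b c : ℝ) (ha : 0 < a) (hb : 0 ≤ b) (hc : 0 < c)
    (hF0 : ∀ x, x ≤ 0 → F x = 0) :
    ∫ y in Set.Ioi (0:ℝ), F ((y - b) / a) ^ c = a * ∫ x in Set.Ioi (0:ℝ), F x ^ c := by
  have hz : ∀ x : ℝ, x ≤ 0 → F x ^ c = 0 := fun x hx => by
    rw [hF0 x hx, Real.zero_rpow (ne_of_gt hc)]
  rw [setIntegral_eq_integral_of_forall_compl_eq_zero (f := fun y => F ((y - b) / a) ^ c)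
    (fun y hy => hz _ (div_nonpos_of_nonpos_of_nonneg
      (by simp only [Set.mem_Ioi, not_lt] at hy; linarith) ha.le)),
    setIntegral_eq_integral_of_forall_compl_eq_zero (f := fun x => F x ^ c)
    (fun x hx => hz _ (by simpa using hx))]
  have h1 : (∫ y : ℝ, F ((y - b) / a) ^ c) = ∫ u : ℝ, F (u / a) ^ c := by
    exact integral_sub_right_eq_self (fun u => F (u / a) ^ c) b
  rw [h1, MeasureTheory.Measure.integral_comp_div (fun x => F x ^ c) a, abs_of_pos ha,
    smul_eq_mul]

/-- Affine transformation of the cumulative Tsallis entropy of MRSSU data: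
if `Y = aX + b` with `a>0, b≥0`, then
`ℂ𝔼_α(Y_MRSSU) = aⁿ ℂ𝔼_α(X_MRSSU) + (aⁿ−1)/(1−α)`. -/
theorem cte_mrssu_affine
    (F G : ℝ → ℝ) (a b α : ℝ) (n : ℕ) (ha : 0 < a) (hb : 0 ≤ b)
    (hα : 0 < α) (hα1 : α ≠ 1)
    (hF01 : ∀ x, 0 ≤ F x ∧ F x ≤ 1) (hFmono : Monotone F)
    (hF0 : ∀ x, x ≤ 0 → F x = 0)
    (hG : ∀ y, G y = F ((y - b) / a))
    (hint : ∀ i : ℕ, Integrable (fun x => F x ^ (((i : ℝ) + 1) * α))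
      (volume.restrict (Set.Ioi (0:ℝ))))
    (CE_X CE_Y : ℝ)
    (hX : CE_X = (1 / (1 - α)) *
      ((∏ i ∈ Finset.range n,
        ∫ x in Set.Ioi (0:ℝ), F x ^ (((i : ℝ) + 1) * α)) - 1))
    (hY : CE_Y = (1 / (1 - α)) *
      ((∏ i ∈ Finset.range n,
        ∫ y in Set.Ioi (0:ℝ), G y ^ (((i : ℝ) + 1) * α)) - 1)) :
    CE_Y = a ^ n * CE_X + (a ^ n - 1) / (1 - α) := by
  have hprod : (∏ i ∈ Finset.range n,
      ∫ y in Set.Ioi (0:ℝ), G y ^ (((i : ℝ) + 1) * α))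
      = a ^ n * ∏ i ∈ Finset.range n,
      ∫ x in Set.Ioi (0:ℝ), F x ^ (((i : ℝ) + 1) * α) := by
    rw [show (a:ℝ) ^ n = ∏ _i ∈ Finset.range n, a by simp, ← Finset.prod_mul_distrib]
    refine Finset.prod_congr rfl fun i _ => ?_
    have hc : 0 < ((i : ℝ) + 1) * α := by positivity
    simp only [hG]
    exact key_int F a b _ ha hb hc hF0
  have h1α : 1 - α ≠ 0 := by
    intro h; apply hα1; linarith
  rw [hY, hprod, hX]
  field_simp
  ring
end

section
/- For X uniform on (0,1) with n=2, the difference ℂ𝔼_α(X_MRSSU) − ℂ𝔼_α(X_SRS) = α / [(α²−1)(2α+1)(α+1)], which is negative for 0<α<1 and positive for α>1. -/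
open MeasureTheory Set

/-- For `X` uniform on `(0,1)` with `n = 2`, the difference
`ℂ𝔼_α(X_MRSSU) − ℂ𝔼_α(X_SRS) = α/[(α²−1)(2α+1)(α+1)]`, which is negative for
`0<α<1` and positive for `α>1`. -/
theorem cte_uniform_n2_difference
    (α : ℝ) (hα : 0 < α) (hα1 : α ≠ 1)
    (CE_SRS CE_MRSSU : ℝ)
    (hS : CE_SRS = (1 / (1 - α)) * ((∫ x in (0:ℝ)..1, x ^ α) ^ 2 - 1))
    (hM : CE_MRSSU = (1 / (1 - α)) *
      ((∫ x in (0:ℝ)..1, x ^ α) * (∫ x in (0:ℝ)..1, x ^ (2 * α)) - 1)) :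
    CE_MRSSU - CE_SRS = α / ((α ^ 2 - 1) * (2 * α + 1) * (α + 1)) ∧
    (α < 1 → CE_MRSSU - CE_SRS < 0) ∧
    (1 < α → 0 < CE_MRSSU - CE_SRS) := by
  have hI1 : (∫ x in (0:ℝ)..1, x ^ α) = 1 / (α + 1) := by
    rw [integral_rpow (Or.inl (by linarith))]
    norm_num
    rw [Real.zero_rpow (by linarith)]
    ring
  have hI2 : (∫ x in (0:ℝ)..1, x ^ (2 * α)) = 1 / (2 * α + 1) := by
    rw [integral_rpow (Or.inl (by linarith))]
    norm_num
    rw [Real.zero_rpow (by linarith)]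
    ring
  have h1 : α + 1 ≠ 0 := by linarith
  have h2 : (2 : ℝ) * α + 1 ≠ 0 := by linarith
  have h3 : 1 - α ≠ 0 := by
    intro h; apply hα1; linarith
  have key : CE_MRSSU - CE_SRS = α / ((α ^ 2 - 1) * (2 * α + 1) * (α + 1)) := by
    rw [hS, hM, hI1, hI2]
    have h4 : α ^ 2 - 1 ≠ 0 := by
      intro h
      have : (α - 1) * (α + 1) = 0 := by ring_nf; linarith
      rcases mul_eq_zero.1 this with h | h
      · exact hα1 (by linarith)
      · exact h1 h
    field_simp
    ring
  refine ⟨key, ?_, ?_⟩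
  · intro hlt
    rw [key]
    apply div_neg_of_pos_of_neg hα
    have : α ^ 2 - 1 < 0 := by nlinarith
    have : (α ^ 2 - 1) * (2 * α + 1) < 0 := mul_neg_of_neg_of_pos this (by linarith)
    exact mul_neg_of_neg_of_pos this (by linarith)
  · intro hlt
    rw [key]
    apply div_pos hα
    have : 0 < α ^ 2 - 1 := by nlinarith
    positivity
end
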